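/- For all n ≥ 0, the identity x^n = ∑_{k=0}^{n} JS(n,k;z) ∏_{i=0}^{k-1}(x - i(z+i)) holds as polynomials in x (with coefficients polynomials in z). -/

import Mathlib

open Polynomial Finset

/-- The Jacobi-Stirling numbers of the second kind `JS(n,k;z)`, as polynomials in `z`. -/
noncomputable def JS : ℕ → ℕ → Polynomial ℤ
  | 0, 0 => 1
  | 0, _+1 => 0
  | _+1, 0 => 0
  | n+1, k+1 => JS n k + (C ((k : ℤ) + 1) * (C ((k : ℤ) + 1) + X)) * JS n (k+1)

noncomputable def JSP (k : ℕ) : Polynomial (Polynomial ℤ) :=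
  ∏ i ∈ Finset.range k,
    ((X : Polynomial (Polynomial ℤ)) - C (C (i : ℤ) * (Polynomial.X + C (i : ℤ))))

lemma JS_eq_zero : ∀ n k : ℕ, n < k → JS n k = 0
  | 0, _+1, _ => rfl
  | n+1, k+1, h => by
    rw [JS, JS_eq_zero n k (by omega), JS_eq_zero n (k+1) (by omega)]
    ring

lemma X_mul_JSP (k : ℕ) :
    (X : Polynomial (Polynomial ℤ)) * JSP k =
      JSP (k+1) + C (C (k : ℤ) * (Polynomial.X + C (k : ℤ))) * JSP k := by
  rw [JSP, JSP, Finset.prod_range_succ]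
  ring

/-- `x^n = ∑_{k=0}^{n} JS(n,k;z) ∏_{i=0}^{k-1}(x - i(z+i))`, as polynomials in `x`
with coefficients in `ℤ[z]`. -/
theorem pow_eq_sum_JS (n : ℕ) :
    (X : Polynomial (Polynomial ℤ)) ^ n =
      ∑ k ∈ Finset.range (n + 1),
        C (JS n k) *
          ∏ i ∈ Finset.range k,
            ((X : Polynomial (Polynomial ℤ)) - C (C (i : ℤ) * (Polynomial.X + C (i : ℤ)))) := by
  have key : ∀ m, (X : Polynomial (Polynomial ℤ)) ^ m
      = ∑ k ∈ Finset.range (m + 1), C (JS m k) * JSP k := by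
    intro m
    induction m with
    | zero => simp [JS, JSP]
    | succ n ih =>
      rw [pow_succ, ih, Finset.sum_mul]
      have step : ∀ k, C (JS n k) * JSP k * X =
          C (JS n k) * JSP (k+1) +
            C (C (k : ℤ) * (Polynomial.X + C (k : ℤ))) * (C (JS n k) * JSP k) := by
        intro k
        have := X_mul_JSP k
        calc C (JS n k) * JSP k * X = C (JS n k) * (X * JSP k) := by ring
          _ = _ := by rw [this]; ring
      simp only [step]
      rw [Finset.sum_add_distrib]
      -- extend second sum to range (n+2)
      have ext : ∑ k ∈ Finset.range (n+1),
          C (C (k : ℤ) * (Polynomial.X + C (k : ℤ))) * (C (JS n k) * JSP k)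
          = ∑ k ∈ Finset.range (n+2),
          C (C (k : ℤ) * (Polynomial.X + C (k : ℤ))) * (C (JS n k) * JSP k) := by
        rw [Finset.sum_range_succ _ (n+1), JS_eq_zero n (n+1) (by omega)]
        simp
      rw [ext, Finset.sum_range_succ' _ (n+1)]
      simp only [Nat.cast_zero, map_zero, zero_mul, add_zero]
      rw [Finset.sum_range_succ' (fun k => C (JS (n+1) k) * JSP k) (n+1)]
      have h0 : JS (n+1) 0 = 0 := rfl
      rw [h0]
      simp only [map_zero, zero_mul, add_zero]
      rw [← Finset.sum_add_distrib]
      refine Finset.sum_congr rfl fun j _ => ?_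
      have hrec : JS (n+1) (j+1)
          = JS n j + (C ((j : ℤ) + 1) * (C ((j : ℤ) + 1) + X)) * JS n (j+1) := rfl
      have hc : ((j + 1 : ℕ) : ℤ) = (j : ℤ) + 1 := by push_cast; ring
      have harg : C ((j : ℤ) + 1) * ((X : Polynomial ℤ) + C ((j : ℤ) + 1))
          = C ((j : ℤ) + 1) * (C ((j : ℤ) + 1) + X) := by ring
      rw [hrec, hc, harg]
      simp only [map_add, map_mul]
      ring
  simpa only [JSP] using key n
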